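/- Continued fraction expansion for the Fibonomial column generating function: fix an integer n ≥ 0 and set c_m = (−1)^m F_{n+2−m}/F_m for m = 1, …, n+1. In the ring of formal power series ℝ⟦x⟧, define g_{n+1} = 1 + c_{n+1} x and, for m = n, n−1, …, 1, define g_m = 1 + c_m x − c_{m+1} x · g_{m+1}^{−1} (each g_m has constant term 1, hence is invertible). Then for every integer 0 ≤ k ≤ n+1, the coefficient of x^k in the power series 1 − c_1 x · g_1^{−1} equals C(n+k, k)_F. -/

import Mathlib

open PowerSeries Finset
open scoped goldenRatio


/-- The Fibonomial coefficient `C(n,k)_F = ∏_{r=1}^{k} F_{n-r+1}/F_r`, as a real number.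
It equals `0` when `k > n` and `1` when `k = 0`. -/
noncomputable def fibonomial (n k : ℕ) : ℝ :=
  ∏ r ∈ Finset.range k, (Nat.fib (n - r) : ℝ) / (Nat.fib (r + 1) : ℝ)

/-- `cSeq n m = c_m = (−1)^m F_{n+2−m}/F_m`. -/
noncomputable def cSeq (n m : ℕ) : ℝ :=
  (-1 : ℝ) ^ m * (Nat.fib (n + 2 - m) : ℝ) / (Nat.fib m : ℝ)

/-- The tail `g_{n+1-i}` of the continued fraction: `cfTail n i = g_{n+1-i}` where
`g_{n+1} = 1 + c_{n+1} x` and, for `1 ≤ m ≤ n`,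
`g_m = 1 + c_m x − c_{m+1} x ⬝ g_{m+1}⁻¹`. -/
noncomputable def cfTail (n : ℕ) : ℕ → PowerSeries ℝ
  | 0 => 1 + PowerSeries.C (cSeq n (n + 1)) * PowerSeries.X
  | (i + 1) =>
      1 + PowerSeries.C (cSeq n (n - i)) * PowerSeries.X
        - PowerSeries.C (cSeq n ((n - i) + 1)) * PowerSeries.X * (cfTail n i)⁻¹

-- scalar lemmas
lemma fib_succ_ne (k : ℕ) : (Nat.fib (k+1) : ℝ) ≠ 0 := by
  have : 0 < Nat.fib (k+1) := Nat.fib_pos.mpr (Nat.succ_pos k)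
  exact_mod_cast this.ne'

lemma fibL1 (a b : ℕ) : (Nat.fib (a+b) : ℝ) = φ^a * Nat.fib b + ψ^b * Nat.fib a := by
  have h5 : Real.sqrt 5 ≠ 0 := by positivity
  rw [Real.coe_fib_eq, Real.coe_fib_eq, Real.coe_fib_eq, pow_add]
  field_simp
  ring

lemma fibL1' (a b : ℕ) : (Nat.fib (a+b) : ℝ) = ψ^a * Nat.fib b + φ^b * Nat.fib a := by
  have h5 : Real.sqrt 5 ≠ 0 := by positivity
  rw [Real.coe_fib_eq, Real.coe_fib_eq, Real.coe_fib_eq, pow_add]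
  field_simp
  ring

-- fibonomial lemmas
lemma fibonomial_succ (n k : ℕ) :
    fibonomial n (k+1) = fibonomial n k * ((Nat.fib (n-k) : ℝ) / (Nat.fib (k+1) : ℝ)) := by
  rw [fibonomial, Finset.prod_range_succ, fibonomial]

lemma fibonomial_succ_succ (m j : ℕ) :
    fibonomial (m+1) (j+1) = fibonomial m j * ((Nat.fib (m+1) : ℝ) / (Nat.fib (j+1) : ℝ)) := by
  induction j with
  | zero => simp [fibonomial]
  | succ j ih =>
      rw [fibonomial_succ (m+1) (j+1), ih, fibonomial_succ m j,
        show m + 1 - (j+1) = m - j by omega]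
      ring

lemma fibonomial_diag (k : ℕ) : fibonomial k k = 1 := by
  induction k with
  | zero => simp [fibonomial]
  | succ k ih =>
      rw [fibonomial_succ_succ, ih, one_mul, div_self (fib_succ_ne k)]

lemma fibonomial_zero_of_lt {n k : ℕ} (h : n < k) : fibonomial n k = 0 := by
  rw [fibonomial]
  refine Finset.prod_eq_zero (Finset.mem_range.mpr h) ?_
  simp [Nat.sub_self]

-- claim 2 scalar identity
lemma claim2 (N k : ℕ) :
    fibonomial (N+k+1) (k+1) = φ^N * fibonomial (N+k) k + ψ^(k+1) * fibonomial (N+k) (k+1) := by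
  rw [show N+k+1 = (N+k)+1 from rfl, fibonomial_succ_succ, fibonomial_succ,
    show N+k-k = N by omega, show (Nat.fib (N+k+1) : ℝ) = _ from fibL1 N (k+1)]
  field_simp

-- prodc
noncomputable def prodc (n k : ℕ) : ℝ := ∏ j ∈ Finset.range k, cSeq n (j+1)

lemma prodc_zero (n : ℕ) : prodc n 0 = 1 := by simp [prodc]

lemma prodc_succ (n k : ℕ) : prodc n (k+1) = prodc n k * cSeq n (k+1) := by
  rw [prodc, Finset.prod_range_succ, prodc]

lemma prodc_succ_succ (n k : ℕ) :
    prodc (n+1) (k+1) = prodc n k * ((-1:ℝ)^(k+1) * (Nat.fib (n+2) : ℝ) / (Nat.fib (k+1) : ℝ)) := by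
  induction k with
  | zero => simp [prodc, cSeq, show n+1+2-1 = n+2 by omega]
  | succ k ih =>
      rw [prodc_succ (n+1) (k+1), ih, prodc_succ n k, cSeq, cSeq,
        show n+1+2-(k+1+1) = n+1-k by omega, show n+2-(k+1) = n+1-k by omega]
      ring

lemma prodc_eq_zero {n k : ℕ} (h : n + 2 ≤ k) : prodc n k = 0 := by
  rw [prodc]
  refine Finset.prod_eq_zero (Finset.mem_range.mpr (by omega : n+1 < k)) ?_
  simp [cSeq, show n+2-(n+1+1) = 0 by omega]

-- claim 1 scalar identity
lemma claim1 (n k : ℕ) :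
    prodc (n+1) (k+1) = ψ^(k+1) * prodc n (k+1) - φ^(n+1) * ψ^k * prodc n k := by
  by_cases hk : k ≤ n + 1
  · have key : ((Nat.fib (n+2) : ℝ)) = ψ^(k+1) * Nat.fib (n+1-k) + φ^(n+1-k) * Nat.fib (k+1) := by
      rw [show n+2 = (k+1) + (n+1-k) by omega]; exact fibL1' (k+1) (n+1-k)
    have hpq : φ * ψ = -1 := Real.goldenRatio_mul_goldenConj
    obtain ⟨p, hp⟩ : ∃ p : ℝ, φ = p := ⟨_, rfl⟩
    obtain ⟨q, hq⟩ : ∃ q : ℝ, ψ = q := ⟨_, rfl⟩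
    rw [hp, hq] at key hpq ⊢
    rw [prodc_succ_succ, prodc_succ, cSeq, show n+2-(k+1) = n+1-k by omega]
    obtain ⟨a, ha⟩ : ∃ a, n+1 = a+k := ⟨n+1-k, by omega⟩
    have hone : (p*q*(-1:ℝ))^k = 1 := by rw [hpq]; norm_num
    have hphi : p^(n+1) * q^k * (-1:ℝ)^k = p^(n+1-k) := by
      rw [show n+1-k = a by omega, ha, pow_add]
      calc p^a * p^k * q^k * (-1:ℝ)^k = p^a * (p*q*(-1))^k := by ring
        _ = p^a := by rw [hone, mul_one]
    have hdiv : (Nat.fib (k+1):ℝ) / (Nat.fib (k+1):ℝ) = 1 := div_self (fib_succ_ne k)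
    have hsq : ((-1:ℝ))^(k*2) = 1 := by rw [pow_mul']; norm_num
    rw [key]
    linear_combination (prodc n k * (-1:ℝ)^(k+1) * p^(n+1-k)) * hdiv
      + (prodc n k * (-1:ℝ)^k) * hphi - (prodc n k * q^k * p^(n+1)) * hsq
  · have h1 : prodc (n+1) (k+1) = 0 := prodc_eq_zero (by omega)
    have h2 : prodc n (k+1) = 0 := prodc_eq_zero (by omega)
    have h3 : prodc n k = 0 := prodc_eq_zero (by omega)
    rw [h1, h2, h3]; ring

-- power series
noncomputable def Aser (n : ℕ) : PowerSeries ℝ := PowerSeries.mk (prodc n)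
noncomputable def Gser (n : ℕ) : PowerSeries ℝ := PowerSeries.mk (fun k => fibonomial (n+k) k)

lemma coeff_osCX_zero (a : ℝ) (f : PowerSeries ℝ) :
    PowerSeries.coeff 0 ((1 - PowerSeries.C a * PowerSeries.X) * f) =
      PowerSeries.coeff 0 f := by
  rw [sub_mul, one_mul, map_sub, mul_assoc]
  simp

lemma coeff_osCX_succ (a : ℝ) (f : PowerSeries ℝ) (k : ℕ) :
    PowerSeries.coeff (k+1) ((1 - PowerSeries.C a * PowerSeries.X) * f) =
      PowerSeries.coeff (k+1) f - a * PowerSeries.coeff k f := by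
  rw [sub_mul, one_mul, map_sub, mul_assoc, PowerSeries.coeff_C_mul,
    PowerSeries.coeff_succ_X_mul]

lemma claim1' (n : ℕ) :
    Aser (n+1) = (1 - PowerSeries.C (φ^(n+1)) * PowerSeries.X) * PowerSeries.rescale ψ (Aser n) := by
  ext k
  cases k with
  | zero =>
      rw [coeff_osCX_zero, PowerSeries.coeff_rescale]
      simp [Aser, prodc_zero]
  | succ k =>
      rw [coeff_osCX_succ, PowerSeries.coeff_rescale, PowerSeries.coeff_rescale]
      simp only [Aser, PowerSeries.coeff_mk]
      rw [claim1 n k]; ring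

lemma claim2' (n : ℕ) :
    (1 - PowerSeries.C (φ^(n+1)) * PowerSeries.X) * Gser (n+1) = PowerSeries.rescale ψ (Gser n) := by
  ext k
  cases k with
  | zero =>
      rw [coeff_osCX_zero, PowerSeries.coeff_rescale]
      simp [Gser, fibonomial]
  | succ k =>
      rw [coeff_osCX_succ, PowerSeries.coeff_rescale]
      simp only [Gser, PowerSeries.coeff_mk]
      have := claim2 (n+1) k
      rw [show n+1+k+1 = n+1+(k+1) by omega] at this
      rw [this, show n+(k+1) = n+1+k by omega]
      ring

lemma Aser_zero : Aser 0 = 1 - PowerSeries.X := by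
  ext k
  match k with
  | 0 => simp [Aser, prodc_zero]
  | 1 => simp [Aser, prodc_succ, prodc_zero, cSeq]
  | (k+2) =>
      rw [map_sub]
      simp only [PowerSeries.coeff_one, PowerSeries.coeff_X, Aser, PowerSeries.coeff_mk]
      rw [prodc_eq_zero (by omega)]
      norm_num
      omega

lemma AG : ∀ n, Aser n * Gser n = 1 := by
  intro n
  induction n with
  | zero =>
      rw [Aser_zero,
        show (1 - PowerSeries.X : PowerSeries ℝ) = 1 - PowerSeries.C 1 * PowerSeries.X by
          rw [map_one, one_mul]]
      ext k
      cases k with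
      | zero => simp [Gser, fibonomial]
      | succ k =>
          rw [coeff_osCX_succ]
          simp only [Gser, PowerSeries.coeff_mk]
          rw [show (0:ℕ)+(k+1) = k+1 by omega, show (0:ℕ)+k = k by omega,
            fibonomial_diag, fibonomial_diag]
          simp
  | succ n ih =>
      rw [claim1', mul_comm (1 - PowerSeries.C (φ^(n+1)) * PowerSeries.X), mul_assoc,
        claim2', ← map_mul, ih, map_one]

noncomputable def Dser (n i : ℕ) : PowerSeries ℝ :=
  PowerSeries.mk fun k => ∏ j ∈ Finset.range k, cSeq n ((n+1-i)+j)

noncomputable def Eser (n : ℕ) : ℕ → PowerSeries ℝ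
  | 0 => 1
  | (i+1) => Dser n i

lemma cSeq_n2 (n : ℕ) : cSeq n (n+2) = 0 := by
  simp [cSeq, show n+2-(n+2) = 0 by omega]

lemma coeff_one_add_CX_mul_zero (a : ℝ) (f : PowerSeries ℝ) :
    PowerSeries.coeff 0 (1 + PowerSeries.C a * PowerSeries.X * f) = 1 := by
  rw [map_add, mul_assoc]
  simp

lemma coeff_one_add_CX_mul_succ (a : ℝ) (f : PowerSeries ℝ) (k : ℕ) :
    PowerSeries.coeff (k+1) (1 + PowerSeries.C a * PowerSeries.X * f) =
      a * PowerSeries.coeff k f := by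
  rw [map_add, mul_assoc, PowerSeries.coeff_C_mul, PowerSeries.coeff_succ_X_mul,
    PowerSeries.coeff_one]
  simp

lemma Dbase (n : ℕ) : Dser n 0 = 1 + PowerSeries.C (cSeq n (n+1)) * PowerSeries.X := by
  have h1 : (1 + PowerSeries.C (cSeq n (n+1)) * PowerSeries.X)
      = 1 + PowerSeries.C (cSeq n (n+1)) * PowerSeries.X * 1 := by rw [mul_one]
  rw [h1]
  ext k
  match k with
  | 0 => rw [coeff_one_add_CX_mul_zero]; simp [Dser]
  | 1 =>
      rw [coeff_one_add_CX_mul_succ]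
      simp [Dser, Nat.sub_zero]
  | (k+2) =>
      rw [coeff_one_add_CX_mul_succ]
      simp only [Dser, PowerSeries.coeff_mk, Nat.sub_zero, PowerSeries.coeff_one]
      rw [Finset.prod_eq_zero (Finset.mem_range.mpr (by omega : 1 < k+2))
        (by rw [show n+1+1 = n+2 by omega]; exact cSeq_n2 n)]
      simp

lemma Dstep {n i : ℕ} (h : i ≤ n) :
    Dser n (i+1) = 1 + PowerSeries.C (cSeq n (n-i)) * PowerSeries.X * Dser n i := by
  ext k
  cases k with
  | zero => rw [coeff_one_add_CX_mul_zero]; simp [Dser]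
  | succ k =>
      rw [coeff_one_add_CX_mul_succ]
      simp only [Dser, PowerSeries.coeff_mk]
      rw [show n+1-(i+1) = n-i by omega, Finset.prod_range_succ']
      rw [show (n-i)+0 = n-i by omega, mul_comm]
      congr 1
      refine Finset.prod_congr rfl fun j _ => ?_
      rw [show n-i+(j+1) = (n+1-i)+j by omega]

lemma constCfTail (n i : ℕ) : PowerSeries.constantCoeff (cfTail n i) = 1 := by
  cases i with
  | zero => simp [cfTail]
  | succ i => simp [cfTail, mul_assoc]

lemma Mlem (n : ℕ) : ∀ i, i ≤ n → cfTail n i * Eser n i = Eser n (i+1) := by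
  intro i
  induction i with
  | zero =>
      intro _
      show cfTail n 0 * 1 = Dser n 0
      rw [mul_one, cfTail, Dbase]
  | succ i ih =>
      intro hsn
      have hi : i ≤ n := by omega
      have hD : Dser n i = cfTail n i * Eser n i := (ih hi).symm
      have hinv : (cfTail n i)⁻¹ * Dser n i = Eser n i := by
        rw [hD, ← mul_assoc, PowerSeries.inv_mul_cancel _ (by rw [constCfTail]; norm_num),
          one_mul]
      show cfTail n (i+1) * Dser n i = Dser n (i+1)
      rw [cfTail]
      have key : Dser n i = 1 + PowerSeries.C (cSeq n ((n-i)+1)) * PowerSeries.X * Eser n i := by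
        cases i with
        | zero =>
            show Dser n 0 = 1 + PowerSeries.C (cSeq n ((n-0)+1)) * PowerSeries.X * 1
            rw [mul_one, Dbase, show (n-0)+1 = n+1 by omega]
        | succ i' =>
            show Dser n (i'+1) = 1 + PowerSeries.C (cSeq n ((n-(i'+1))+1)) * PowerSeries.X * Dser n i'
            rw [Dstep (by omega : i' ≤ n), show (n-(i'+1))+1 = n-i' by omega]
      calc (1 + PowerSeries.C (cSeq n (n - i)) * PowerSeries.X
            - PowerSeries.C (cSeq n ((n - i) + 1)) * PowerSeries.X * (cfTail n i)⁻¹) * Dser n i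
          = Dser n i + PowerSeries.C (cSeq n (n - i)) * PowerSeries.X * Dser n i
            - PowerSeries.C (cSeq n ((n - i) + 1)) * PowerSeries.X
              * ((cfTail n i)⁻¹ * Dser n i) := by ring
        _ = Dser n (i+1) := by
            rw [hinv, Dstep hi]
            nth_rewrite 1 [key]
            ring


/-- `cfTail n n = g_1`; the coefficients of `1 − c_1 x ⬝ g_1⁻¹` up to degree `n+1`
are the Fibonomial coefficients `C(n+k,k)_F`. -/
theorem fibonomial_continued_fraction_column (n k : ℕ) (hk : k ≤ n + 1) :
    PowerSeries.coeff k
        (1 - PowerSeries.C (cSeq n 1) * PowerSeries.X * (cfTail n n)⁻¹) =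
      fibonomial (n + k) k := by
  set T : PowerSeries ℝ :=
    1 - PowerSeries.C (cSeq n 1) * PowerSeries.X * (cfTail n n)⁻¹ with hTdef
  have h1 : cfTail n n * Eser n n = Dser n n := Mlem n n le_rfl
  have h2 : Dser n n = 1 + PowerSeries.C (cSeq n 1) * PowerSeries.X * Eser n n := by
    cases n with
    | zero =>
        show Dser 0 0 = 1 + PowerSeries.C (cSeq 0 1) * PowerSeries.X * 1
        rw [mul_one, Dbase]
    | succ m =>
        show Dser (m+1) (m+1) = 1 + PowerSeries.C (cSeq (m+1) 1) * PowerSeries.X * Dser (m+1) m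
        rw [Dstep (by omega : m ≤ m+1), show (m+1)-m = 1 by omega]
  have hinv : (cfTail n n)⁻¹ * Dser n n = Eser n n := by
    rw [← h1, ← mul_assoc,
      PowerSeries.inv_mul_cancel _ (by rw [constCfTail]; norm_num), one_mul]
  have hT : T * Dser n n = 1 := by
    calc T * Dser n n
        = Dser n n - PowerSeries.C (cSeq n 1) * PowerSeries.X
            * ((cfTail n n)⁻¹ * Dser n n) := by rw [hTdef]; ring
      _ = 1 := by rw [hinv]; nth_rewrite 1 [h2]; ring
  have hDA : Dser n n = Aser n := by
    ext k'
    simp only [Dser, Aser, PowerSeries.coeff_mk, prodc]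
    refine Finset.prod_congr rfl fun j _ => ?_
    rw [show (n+1-n)+j = j+1 by omega]
  have hTG : T = Gser n := by
    calc T = T * (Aser n * Gser n) := by rw [AG n, mul_one]
      _ = (T * Dser n n) * Gser n := by rw [hDA]; ring
      _ = Gser n := by rw [hT, one_mul]
  rw [hTG]
  simp [Gser]
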